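/- arXiv:math/0510228 — 2 statements merged into one kernel-verified Lean document; each statement's English description precedes it below -/
import Mathlib

section
/- Let n be a natural number, G = (Fin n → ZMod 2), R = AddMonoidAlgebra (ZMod 2) G, and I ⊆ R the augmentation ideal. For every k ≥ 1, the k-th power I^k of the augmentation ideal, viewed as a (ZMod 2)-submodule of R, equals the (ZMod 2)-linear span of the set of fundamental classes [H] := ∑_{h ∈ H} [h], where H ranges over the subgroups of G with exactly 2^k elements. -/
open AddMonoidAlgebra

/-- The augmentation homomorphism of the group algebra of `(ZMod 2)^n` over `ZMod 2`:
the algebra homomorphism sending each basis element `[g]` to `1`. -/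
noncomputable def aug (n : ℕ) :
    AddMonoidAlgebra (ZMod 2) (Fin n → ZMod 2) →ₐ[ZMod 2] ZMod 2 :=
  AddMonoidAlgebra.lift (ZMod 2) (ZMod 2) (Fin n → ZMod 2) 1

/-- The augmentation ideal, i.e. the kernel of the augmentation homomorphism. -/
noncomputable def augIdeal (n : ℕ) : Ideal (AddMonoidAlgebra (ZMod 2) (Fin n → ZMod 2)) :=
  RingHom.ker (aug n)

/-- The fundamental class `[H] = ∑_{h ∈ H} [h]` of a subgroup `H` of `(ZMod 2)^n`. -/
noncomputable def fundClass (n : ℕ) (H : AddSubgroup (Fin n → ZMod 2)) :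
    AddMonoidAlgebra (ZMod 2) (Fin n → ZMod 2) :=
  ∑ᶠ h : H, AddMonoidAlgebra.single (h : Fin n → ZMod 2) (1 : ZMod 2)

/-! ### Auxiliary lemmas -/

section Aux

variable {n : ℕ}

local notation "G" => Fin n → ZMod 2
local notation "R" => AddMonoidAlgebra (ZMod 2) (Fin n → ZMod 2)

lemma zmod2_add_self (a : ZMod 2) : a + a = 0 := by
  rw [← two_mul, show (2 : ZMod 2) = 0 from rfl, zero_mul]

lemma g_add_self (x : G) : x + x = 0 := funext fun i => zmod2_add_self (x i)

lemma r_add_self (x : R) : x + x = 0 := by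
  rw [← two_smul (ZMod 2) x, show (2 : ZMod 2) = 0 from rfl, zero_smul]

/-- The finset of elements of a subgroup. -/
noncomputable def sgF (H : AddSubgroup G) : Finset G :=
  (Set.toFinite (H : Set G)).toFinset

lemma mem_sgF {H : AddSubgroup G} {x : G} : x ∈ sgF H ↔ x ∈ H :=
  Set.Finite.mem_toFinset _

lemma fundClass_eq (H : AddSubgroup G) :
    fundClass n H = ∑ h ∈ sgF H, AddMonoidAlgebra.single h (1 : ZMod 2) := by
  haveI : Fintype ↥H := Fintype.ofFinite _
  rw [fundClass, finsum_eq_sum_of_fintype,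
    Finset.sum_subtype (sgF H) (fun x => mem_sgF)
      (fun h => AddMonoidAlgebra.single h (1 : ZMod 2))]

lemma card_eq_sgF_card (H : AddSubgroup G) : Nat.card H = (sgF H).card := by
  rw [show Nat.card ↥H = Nat.card ↥(H : Set G) from rfl, Nat.card_coe_set_eq,
    Set.ncard_eq_toFinset_card _ (Set.toFinite _)]
  rfl

/-- Extension of a subgroup `H` by an element `g`. If `g ∉ H` this is `H ∪ (g + H)`. -/
def extGrp (H : AddSubgroup G) (g : G) : AddSubgroup (Fin n → ZMod 2) where
  carrier := {x | x ∈ H ∨ g + x ∈ H}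
  zero_mem' := Or.inl H.zero_mem
  add_mem' := by
    rintro a b (ha | ha) (hb | hb)
    · exact Or.inl (H.add_mem ha hb)
    · exact Or.inr (by rw [show g + (a + b) = a + (g + b) by abel]; exact H.add_mem ha hb)
    · exact Or.inr (by rw [show g + (a + b) = (g + a) + b by abel]; exact H.add_mem ha hb)
    · refine Or.inl ?_
      have := H.add_mem ha hb
      rwa [show (g + a) + (g + b) = (g + g) + (a + b) by abel, g_add_self, zero_add] at this
  neg_mem' := by
    rintro a ha
    rwa [neg_eq_of_add_eq_zero_left (g_add_self a)]

lemma mem_extGrp {H : AddSubgroup G} {g x : G} :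
    x ∈ extGrp H g ↔ x ∈ H ∨ g + x ∈ H := Iff.rfl

lemma sgF_extGrp (H : AddSubgroup G) (g : G) :
    sgF (extGrp H g) = sgF H ∪ (sgF H).image (g + ·) := by
  ext x
  simp only [mem_sgF, Finset.mem_union, Finset.mem_image, mem_extGrp]
  constructor
  · rintro (hx | hx)
    · exact Or.inl hx
    · refine Or.inr ⟨g + x, hx, ?_⟩
      rw [← add_assoc, g_add_self, zero_add]
  · rintro (hx | ⟨h, hh, rfl⟩)
    · exact Or.inl hx
    · refine Or.inr ?_
      rwa [← add_assoc, g_add_self, zero_add]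

lemma disjoint_sgF {H : AddSubgroup G} {g : G} (hg : g ∉ H) :
    Disjoint (sgF H) ((sgF H).image (g + ·)) := by
  rw [Finset.disjoint_left]
  intro x hx hmem
  rw [Finset.mem_image] at hmem
  obtain ⟨h, hh, rfl⟩ := hmem
  rw [mem_sgF] at hx hh
  exact hg (by simpa using H.add_mem hx (H.neg_mem hh))

lemma card_extGrp {H : AddSubgroup G} {g : G} (hg : g ∉ H) :
    Nat.card (extGrp H g) = 2 * Nat.card H := by
  rw [card_eq_sgF_card, card_eq_sgF_card, sgF_extGrp,
    Finset.card_union_of_disjoint (disjoint_sgF hg),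
    Finset.card_image_of_injective _ (add_right_injective g)]
  ring

lemma single_mul_fundClass (H : AddSubgroup G) (g : G) :
    AddMonoidAlgebra.single g (1 : ZMod 2) * fundClass n H =
      ∑ x ∈ (sgF H).image (g + ·), AddMonoidAlgebra.single x (1 : ZMod 2) := by
  rw [fundClass_eq, Finset.mul_sum,
    Finset.sum_image (fun x _ y _ h => add_right_injective g h)]
  refine Finset.sum_congr rfl fun h _ => ?_
  rw [AddMonoidAlgebra.single_mul_single, one_mul]

lemma fundClass_extGrp {H : AddSubgroup G} {g : G} (hg : g ∉ H) :
    fundClass n (extGrp H g) =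
      (1 + AddMonoidAlgebra.single g (1 : ZMod 2)) * fundClass n H := by
  rw [add_mul, one_mul, single_mul_fundClass, fundClass_eq (extGrp H g), sgF_extGrp,
    Finset.sum_union (disjoint_sgF hg), ← fundClass_eq]

lemma mul_fundClass_self {H : AddSubgroup G} {g : G} (hg : g ∈ H) :
    (1 + AddMonoidAlgebra.single g (1 : ZMod 2)) * fundClass n H = 0 := by
  have himg : (sgF H).image (g + ·) = sgF H := by
    ext x
    simp only [Finset.mem_image, mem_sgF]
    constructor
    · rintro ⟨h, hh, rfl⟩
      exact H.add_mem hg hh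
    · intro hx
      refine ⟨g + x, H.add_mem hg hx, ?_⟩
      rw [← add_assoc, g_add_self, zero_add]
  rw [add_mul, one_mul, single_mul_fundClass, himg, ← fundClass_eq, r_add_self]

/-- The coordinate slice of a subgroup. -/
def sliceSG (H : AddSubgroup G) (i : Fin n) : AddSubgroup (Fin n → ZMod 2) where
  carrier := {x | x ∈ H ∧ x i = 0}
  zero_mem' := ⟨H.zero_mem, rfl⟩
  add_mem' := by
    rintro a b ⟨ha, ha'⟩ ⟨hb, hb'⟩
    exact ⟨H.add_mem ha hb, by simp [Pi.add_apply, ha', hb']⟩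
  neg_mem' := by
    rintro a ⟨ha, ha'⟩
    exact ⟨H.neg_mem ha, by simp [Pi.neg_apply, ha']⟩

lemma zmod2_ne_zero {a : ZMod 2} (ha : a ≠ 0) : a = 1 := by
  revert ha; revert a; decide

lemma exists_decomp (H : AddSubgroup G) (k : ℕ) (hH : Nat.card H = 2 ^ (k + 1)) :
    ∃ (H₀ : AddSubgroup (Fin n → ZMod 2)) (g : Fin n → ZMod 2),
      g ∉ H₀ ∧ Nat.card H₀ = 2 ^ k ∧ extGrp H₀ g = H := by
  -- find a nonzero element of `H`
  have hcard : 1 < Nat.card ↥H := by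
    rw [hH]
    exact Nat.one_lt_two_pow (Nat.succ_ne_zero k)
  haveI : Finite ↥H := Nat.finite_of_card_ne_zero (by omega)
  haveI : Nontrivial ↥H := Finite.one_lt_card_iff_nontrivial.mp hcard
  obtain ⟨x, hx⟩ := exists_ne (0 : ↥H)
  set g : Fin n → ZMod 2 := (x : Fin n → ZMod 2) with hgdef
  have hgH : g ∈ H := x.2
  have hg0 : g ≠ 0 := by
    intro h
    exact hx (Subtype.ext h)
  obtain ⟨i, hi⟩ := Function.ne_iff.mp hg0
  have hgi : g i = 1 := zmod2_ne_zero (by simpa using hi)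
  refine ⟨sliceSG H i, g, ?_, ?_, ?_⟩
  · intro hmem
    have : g i = 0 := hmem.2
    rw [hgi] at this
    exact one_ne_zero this
  · have hext : extGrp (sliceSG H i) g = H := by
      ext x
      constructor
      · rintro (hx | hx)
        · exact hx.1
        · have hx' : g + x ∈ H := hx.1
          have : g + (g + x) ∈ H := H.add_mem hgH hx'
          rwa [← add_assoc, g_add_self, zero_add] at this
      · intro hx
        by_cases hxi : x i = 0
        · exact Or.inl ⟨hx, hxi⟩
        · refine Or.inr ⟨H.add_mem hgH hx, ?_⟩
          have : (g + x) i = g i + x i := rfl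
          rw [this, hgi, zmod2_ne_zero hxi]
          rfl
    have hne : g ∉ sliceSG H i := by
      intro hmem
      have : g i = 0 := hmem.2
      rw [hgi] at this
      exact one_ne_zero this
    have := card_extGrp hne
    rw [hext, hH] at this
    have h2 : 2 ^ (k + 1) = 2 * 2 ^ k := by ring
    omega
  · ext x
    constructor
    · rintro (hx | hx)
      · exact hx.1
      · have hx' : g + x ∈ H := hx.1
        have : g + (g + x) ∈ H := H.add_mem hgH hx'
        rwa [← add_assoc, g_add_self, zero_add] at this
    · intro hx
      by_cases hxi : x i = 0
      · exact Or.inl ⟨hx, hxi⟩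
      · refine Or.inr ⟨H.add_mem hgH hx, ?_⟩
        have : (g + x) i = g i + x i := rfl
        rw [this, hgi, zmod2_ne_zero hxi]
        rfl

lemma aug_single (g : G) (c : ZMod 2) :
    aug n (AddMonoidAlgebra.single g c) = c := by
  rw [aug, AddMonoidAlgebra.lift_single]
  simp

lemma one_add_single_mem (g : G) :
    (1 + AddMonoidAlgebra.single g (1 : ZMod 2)) ∈ augIdeal n := by
  rw [augIdeal, RingHom.mem_ker, map_add, map_one, aug_single]
  rfl

lemma aug_eq_sum (x : R) : aug n x = ∑ g ∈ x.coeff.support, x.coeff g := by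
  rw [aug, AddMonoidAlgebra.lift_apply]
  simp [Finsupp.sum]

lemma restrict_augIdeal :
    Submodule.restrictScalars (ZMod 2) (augIdeal n) =
      Submodule.span (ZMod 2)
        {x : R | ∃ g : G, x = 1 + AddMonoidAlgebra.single g (1 : ZMod 2)} := by
  refine le_antisymm ?_ ?_
  · intro x hx
    have hx0 : aug n x = 0 := by
      have hx' : x ∈ augIdeal n := hx
      rwa [augIdeal, RingHom.mem_ker] at hx'
    have hxs : x = ∑ g ∈ x.coeff.support, AddMonoidAlgebra.single g (x.coeff g) := by
      conv_lhs => rw [← AddMonoidAlgebra.sum_single x]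
      rfl
    have key : x = ∑ g ∈ x.coeff.support, x.coeff g • (1 + AddMonoidAlgebra.single g (1 : ZMod 2)) := by
      calc x = (aug n x) • (1 : R) + x := by rw [hx0, zero_smul, zero_add]
        _ = ∑ g ∈ x.coeff.support, (x.coeff g • (1 : R) +
              x.coeff g • AddMonoidAlgebra.single g (1 : ZMod 2)) := by
            rw [Finset.sum_add_distrib]
            congr 1
            · rw [aug_eq_sum, Finset.sum_smul]
            · conv_lhs => rw [hxs]
              refine Finset.sum_congr rfl fun g _ => ?_
              rw [AddMonoidAlgebra.smul_single', mul_one]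
        _ = ∑ g ∈ x.coeff.support, x.coeff g • (1 + AddMonoidAlgebra.single g (1 : ZMod 2)) := by
            refine Finset.sum_congr rfl fun g _ => ?_
            rw [smul_add]
    rw [key]
    exact Submodule.sum_mem _ fun g _ =>
      Submodule.smul_mem _ _ (Submodule.subset_span ⟨g, rfl⟩)
  · rw [Submodule.span_le]
    rintro x ⟨g, rfl⟩
    exact one_add_single_mem g

lemma fundClass_bot : fundClass n (⊥ : AddSubgroup G) = 1 := by
  rw [fundClass_eq]
  have : sgF (⊥ : AddSubgroup G) = {0} := by
    ext x
    simp [mem_sgF, AddSubgroup.mem_bot]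
  rw [this, Finset.sum_singleton, ← AddMonoidAlgebra.one_def]

end Aux

/-- For `k ≥ 1`, the `k`-th power of the augmentation ideal, viewed as a `ZMod 2`-submodule,
is the `ZMod 2`-linear span of the fundamental classes of the subgroups with `2 ^ k`
elements (the rank-`k` subgroups). -/
theorem augIdeal_pow_eq_span_fundClass (n k : ℕ) (hk : 1 ≤ k) :
    Submodule.restrictScalars (ZMod 2) ((augIdeal n) ^ k) =
      Submodule.span (ZMod 2)
        {x : AddMonoidAlgebra (ZMod 2) (Fin n → ZMod 2) |
          ∃ H : AddSubgroup (Fin n → ZMod 2), Nat.card H = 2 ^ k ∧ x = fundClass n H} := by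
  induction k, hk using Nat.le_induction with
  | base =>
    refine le_antisymm ?_ ?_
    · rw [pow_one, restrict_augIdeal, Submodule.span_le]
      rintro x ⟨g, rfl⟩
      rw [SetLike.mem_coe]
      by_cases hg : g = 0
      · subst hg
        rw [show (1 : AddMonoidAlgebra (ZMod 2) (Fin n → ZMod 2)) +
            AddMonoidAlgebra.single (0 : Fin n → ZMod 2) (1 : ZMod 2) = 0 from by
          rw [← AddMonoidAlgebra.one_def]; exact r_add_self 1]
        exact zero_mem _
      · have hgb : g ∉ (⊥ : AddSubgroup (Fin n → ZMod 2)) := by simpa using hg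
        have := fundClass_extGrp hgb
        rw [fundClass_bot, mul_one] at this
        rw [← this]
        refine Submodule.subset_span ⟨extGrp ⊥ g, ?_, rfl⟩
        rw [card_extGrp hgb, AddSubgroup.card_bot, pow_one]
    · rw [Submodule.span_le]
      rintro x ⟨H, hH, rfl⟩
      rw [SetLike.mem_coe, Submodule.restrictScalars_mem, pow_one]
      obtain ⟨H₀, g, hg, hc, rfl⟩ := exists_decomp H 0 (by simp [hH])
      rw [pow_zero] at hc
      have hb : H₀ = ⊥ := AddSubgroup.eq_bot_of_card_eq _ hc
      subst hb
      rw [fundClass_extGrp hg, fundClass_bot, mul_one]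
      exact one_add_single_mem g
  | succ k hk ih =>
    rw [pow_succ,
      show Submodule.restrictScalars (ZMod 2) (augIdeal n ^ k * augIdeal n) =
        Submodule.restrictScalars (ZMod 2) (augIdeal n ^ k) *
          Submodule.restrictScalars (ZMod 2) (augIdeal n) from rfl,
      ih, restrict_augIdeal, Submodule.span_mul_span]
    refine le_antisymm ?_ ?_
    · rw [Submodule.span_le]
      intro x hx
      rw [Set.mem_mul] at hx
      obtain ⟨y, ⟨H, hH, rfl⟩, z, ⟨g, rfl⟩, rfl⟩ := hx
      rw [SetLike.mem_coe, mul_comm]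
      by_cases hg : g ∈ H
      · rw [mul_fundClass_self hg]
        exact zero_mem _
      · rw [← fundClass_extGrp hg]
        refine Submodule.subset_span ⟨extGrp H g, ?_, rfl⟩
        rw [card_extGrp hg, hH]
        ring
    · rw [Submodule.span_le]
      rintro x ⟨H, hH, rfl⟩
      obtain ⟨H₀, g, hg, hc, rfl⟩ := exists_decomp H k hH
      rw [SetLike.mem_coe, fundClass_extGrp hg, mul_comm]
      exact Submodule.subset_span (Set.mul_mem_mul ⟨H₀, hc, rfl⟩ ⟨g, rfl⟩)
end

section
/- Let n be a natural number and G = (Fin n → ZMod 2). There exists an isomorphism of (ZMod 2)-algebras between the exterior algebra ExteriorAlgebra (ZMod 2) (Fin n → ZMod 2) and the group algebra AddMonoidAlgebra (ZMod 2) G. -/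
open ExteriorAlgebra

namespace ExtIsoAux

theorem addSelf {M : Type*} [AddCommMonoid M] [Module (ZMod 2) M] (x : M) : x + x = 0 := by
  have : ((2 : ZMod 2)) • x = x + x := two_smul _ x
  rw [show ((2 : ZMod 2)) = 0 by decide, zero_smul] at this
  exact this.symm

variable (n : ℕ)

theorem ecomm (a b : ExteriorAlgebra (ZMod 2) (Fin n → ZMod 2)) : a * b = b * a := by
  have hι : ∀ (x : Fin n → ZMod 2) b, Commute (ι (ZMod 2) x) b := by
    intro x b
    induction b using ExteriorAlgebra.induction with
    | algebraMap r => exact (Algebra.commutes r _).symm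
    | ι y =>
        have h := ExteriorAlgebra.ι_add_mul_swap (R := ZMod 2) x y
        unfold Commute SemiconjBy
        have h3 : ι (ZMod 2) y * ι (ZMod 2) x =
            ι (ZMod 2) y * ι (ZMod 2) x +
              (ι (ZMod 2) x * ι (ZMod 2) y + ι (ZMod 2) y * ι (ZMod 2) x) := by
          rw [h, add_zero]
        rw [add_comm] at h3
        nth_rewrite 1 [h3]
        rw [add_assoc, addSelf, add_zero]
    | mul a b ha hb => exact ha.mul_right hb
    | add a b ha hb => exact ha.add_right hb
  induction a using ExteriorAlgebra.induction with
  | algebraMap r => exact Algebra.commutes r b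
  | ι x => exact hι x b
  | mul a c ha hc => rw [mul_assoc, hc, ← mul_assoc, ha, mul_assoc]
  | add a c ha hc => rw [add_mul, ha, hc, mul_add]

@[reducible] noncomputable def commE : CommRing (ExteriorAlgebra (ZMod 2) (Fin n → ZMod 2)) :=
  { (inferInstance : Ring (ExteriorAlgebra (ZMod 2) (Fin n → ZMod 2))) with
    mul_comm := ecomm n }

noncomputable def e (i : Fin n) : Fin n → ZMod 2 := Pi.basisFun (ZMod 2) (Fin n) i

noncomputable def x (i : Fin n) : ExteriorAlgebra (ZMod 2) (Fin n → ZMod 2) :=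
  1 + ι (ZMod 2) (e n i)

theorem x_sq (i : Fin n) : x n i * x n i = 1 := by
  simp only [x, mul_add, add_mul, one_mul, mul_one, ι_sq_zero, add_zero]
  rw [add_assoc, addSelf, add_zero]

theorem pow_val_add (y : ExteriorAlgebra (ZMod 2) (Fin n → ZMod 2)) (hy : y * y = 1)
    (a b : ZMod 2) : y ^ (a + b).val = y ^ a.val * y ^ b.val := by
  have hsq : y ^ 2 = 1 := by rw [pow_two, hy]
  have key : ∀ m : ℕ, y ^ m = y ^ (m % 2) := by
    intro m
    conv_lhs => rw [← Nat.mod_add_div m 2, pow_add, pow_mul, hsq, one_pow, mul_one]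
  rw [← pow_add, key (a.val + b.val), ZMod.val_add]

noncomputable def F : Multiplicative (Fin n → ZMod 2) →* ExteriorAlgebra (ZMod 2) (Fin n → ZMod 2) :=
  letI : CommRing (ExteriorAlgebra (ZMod 2) (Fin n → ZMod 2)) := commE n
  { toFun := fun g => ∏ i, x n i ^ ((Multiplicative.toAdd g) i).val
    map_one' := by simp
    map_mul' := by
      intro g h
      letI := commE n
      calc (∏ i, x n i ^ ((Multiplicative.toAdd (g * h)) i).val)
          = ∏ i, (x n i ^ ((Multiplicative.toAdd g) i).val *
              x n i ^ ((Multiplicative.toAdd h) i).val) :=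
            Finset.prod_congr rfl fun i _ => pow_val_add n _ (x_sq n i) _ _
        _ = _ := Finset.prod_mul_distrib }

noncomputable def ψ : AddMonoidAlgebra (ZMod 2) (Fin n → ZMod 2) →ₐ[ZMod 2]
    ExteriorAlgebra (ZMod 2) (Fin n → ZMod 2) :=
  AddMonoidAlgebra.lift (ZMod 2) _ (Fin n → ZMod 2) (F n)

/-- the generators `single eᵢ + 1` of the group algebra -/
noncomputable def y (i : Fin n) : AddMonoidAlgebra (ZMod 2) (Fin n → ZMod 2) :=
  AddMonoidAlgebra.single (e n i) 1 + 1

theorem y_sq (i : Fin n) : y n i * y n i = 0 := by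
  have h1 : AddMonoidAlgebra.single (M := Fin n → ZMod 2) (e n i) (1 : ZMod 2) *
      AddMonoidAlgebra.single (e n i) 1 = 1 := by
    rw [AddMonoidAlgebra.single_mul_single, addSelf, mul_one, ← AddMonoidAlgebra.one_def]
  have h2 : (AddMonoidAlgebra.single (M := Fin n → ZMod 2) (e n i) (1 : ZMod 2) + 1) *
      (AddMonoidAlgebra.single (e n i) 1 + 1) =
      AddMonoidAlgebra.single (e n i) 1 * AddMonoidAlgebra.single (e n i) 1 +
        (AddMonoidAlgebra.single (e n i) 1 + AddMonoidAlgebra.single (e n i) 1) + 1 := by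
    ring
  rw [y, h2, h1, addSelf, add_zero, addSelf]

noncomputable def f : (Fin n → ZMod 2) →ₗ[ZMod 2] AddMonoidAlgebra (ZMod 2) (Fin n → ZMod 2) :=
  (Pi.basisFun (ZMod 2) (Fin n)).constr (ZMod 2) (y n)

theorem f_apply (m : Fin n → ZMod 2) : f n m = ∑ i, m i • y n i := by
  rw [f, Module.Basis.constr_apply_fintype]
  simp

theorem f_cond (m : Fin n → ZMod 2) : f n m * f n m = 0 := by
  haveI : CharP (AddMonoidAlgebra (ZMod 2) (Fin n → ZMod 2)) 2 := by
    refine CharTwo.of_one_ne_zero_of_two_eq_zero ?_ ?_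
    · intro h
      have := congrArg (fun g => g.coeff (0 : Fin n → ZMod 2)) h
      simp [AddMonoidAlgebra.one_def] at this
    · rw [show (2 : AddMonoidAlgebra (ZMod 2) (Fin n → ZMod 2)) = 1 + 1 from one_add_one_eq_two.symm,
        addSelf]
  rw [f_apply, CharTwo.sum_mul_self]
  refine Finset.sum_eq_zero fun i _ => ?_
  rw [smul_mul_smul_comm, y_sq, smul_zero]

noncomputable def φ : ExteriorAlgebra (ZMod 2) (Fin n → ZMod 2) →ₐ[ZMod 2]
    AddMonoidAlgebra (ZMod 2) (Fin n → ZMod 2) :=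
  ExteriorAlgebra.lift (ZMod 2) ⟨f n, f_cond n⟩

theorem φ_ι (m : Fin n → ZMod 2) : φ n (ι (ZMod 2) m) = f n m :=
  ExteriorAlgebra.lift_ι_apply (ZMod 2) (f n) (f_cond n) m

theorem f_basis (i : Fin n) : f n (e n i) = y n i := Module.Basis.constr_basis _ _ _ _

set_option synthInstance.maxHeartbeats 400000 in
theorem φ_x (i : Fin n) : φ n (x n i) = AddMonoidAlgebra.single (e n i) 1 := by
  rw [x, map_add, map_one, φ_ι, f_basis, y, add_left_comm, addSelf, add_zero]

theorem comp1 : (φ n).comp (ψ n) = AlgHom.id _ _ := by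
  apply AddMonoidAlgebra.algHom_ext
  intro a
  letI := commE n
  have hψ : ψ n (AddMonoidAlgebra.single a 1) = F n (Multiplicative.ofAdd a) := by
    rw [ψ, AddMonoidAlgebra.lift_single, one_smul]
  rw [AlgHom.comp_apply, hψ]
  have : F n (Multiplicative.ofAdd a) = ∏ i, x n i ^ (a i).val := rfl
  rw [this, map_prod]
  simp only [map_pow, φ_x, AddMonoidAlgebra.single_pow, one_pow]
  rw [AddMonoidAlgebra.prod_single, Finset.prod_const_one]
  have hsum : (∑ i, (a i).val • e n i) = a := by
    have h1 : ∀ i : Fin n, (a i).val • e n i = a i • e n i := fun i => by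
      rw [← Nat.cast_smul_eq_nsmul (ZMod 2), ZMod.natCast_val, ZMod.cast_id]
    simp_rw [h1]
    simpa [Pi.basisFun_repr, e, Pi.basisFun_apply] using (Pi.basisFun (ZMod 2) (Fin n)).sum_repr a
  rw [hsum]
  rfl
  exact Subsingleton.elim _ _

theorem comp2 : (ψ n).comp (φ n) = AlgHom.id _ _ := by
  apply ExteriorAlgebra.hom_ext
  apply Module.Basis.ext (Pi.basisFun (ZMod 2) (Fin n))
  intro i
  letI := commE n
  show ψ n (φ n (ι (ZMod 2) (e n i))) = ι (ZMod 2) (e n i)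
  rw [φ_ι, f_basis, y, map_add, map_one]
  have hψ : ψ n (AddMonoidAlgebra.single (e n i) 1) = F n (Multiplicative.ofAdd (e n i)) := by
    rw [ψ, AddMonoidAlgebra.lift_single, one_smul]
  rw [hψ]
  have : F n (Multiplicative.ofAdd (e n i)) = ∏ j, x n j ^ ((e n i) j).val := rfl
  rw [this]
  have hprod : (∏ j, x n j ^ ((e n i) j).val) = x n i := by
    rw [Finset.prod_eq_single i]
    · rw [show (e n i i) = 1 by simp [e, Pi.basisFun_apply], show (1 : ZMod 2).val = 1 by decide,
        pow_one]
    · intro j _ hj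
      rw [show (e n i) j = 0 by simp [e, Pi.basisFun_apply, Pi.single_apply, hj.symm],
        ZMod.val_zero, pow_zero]
    · simp
  rw [hprod, x, add_assoc, add_left_comm, addSelf, add_zero]

noncomputable def iso : ExteriorAlgebra (ZMod 2) (Fin n → ZMod 2) ≃ₐ[ZMod 2]
    AddMonoidAlgebra (ZMod 2) (Fin n → ZMod 2) :=
  AlgEquiv.ofAlgHom (φ n) (ψ n) (comp1 n) (comp2 n)

end ExtIsoAux



/-- The exterior algebra of the `n`-dimensional `ZMod 2`-vector space and the group algebra of
the elementary abelian 2-group of rank `n` over `ZMod 2` are isomorphic as `ZMod 2`-algebras.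
(For an `n`-dimensional compact torus `T`, this is the isomorphism of ungraded algebras
`H_*(T; ℤ/2) ≅ H_0(T[2]; ℤ/2)`.) -/
theorem exteriorAlgebra_iso_groupAlgebra (n : ℕ) :
    Nonempty
      (ExteriorAlgebra (ZMod 2) (Fin n → ZMod 2) ≃ₐ[ZMod 2]
        AddMonoidAlgebra (ZMod 2) (Fin n → ZMod 2)) := by
  exact ⟨ExtIsoAux.iso n⟩
end
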